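/- Let N : D(N) ⊆ H → H be a self-adjoint Fredholm operator with finite-dimensional kernel 𝐇 = ker N, and suppose H = Ran(N) ⊕ 𝐇 orthogonally. Let {N_s} be a C² family with N₀ = N. Then for small s, the finite-dimensional operator T(s) = (I−Π)∘N_s∘(id + f(·,s)) : 𝐇 → 𝐇 obtained from the implicit function theorem (with Π the projection onto Ran(N) and f(φ,0)=0, ∂f/∂s(φ,0)=0) satisfies T(s)* = T(s) with respect to the inner product on 𝐇, provided each N_s is symmetric. -/

import Mathlib

/-- Lemma 4.10(a), finite-dimensional model: the local model
`T(s) : 𝐇 → 𝐇` of a family of symmetric operators `N_s`, obtained via the implicit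
function theorem (`f(φ,s) ⊥ 𝐇`, `f(φ,0) = 0`, `T(s)φ = N_s(φ + f(φ,s)) ∈ 𝐇`), is
itself symmetric with respect to the inner product of `𝐇`. -/
theorem local_model_symmetric {H : Type*} [NormedAddCommGroup H]
    [InnerProductSpace ℝ H] (K : Submodule ℝ H) (N : ℝ → (H →ₗ[ℝ] H))
    (hNsym : ∀ s v w, (inner ℝ (N s v) w : ℝ) = (inner ℝ v (N s w) : ℝ))
    (f : K → ℝ → H) (hf0 : ∀ φ : K, f φ 0 = 0)
    (hfmem : ∀ (φ : K) (s : ℝ), f φ s ∈ Kᗮ)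
    (T : ℝ → (K →ₗ[ℝ] K))
    (hT : ∀ (s : ℝ) (φ : K), ((T s φ : K) : H) = N s ((φ : H) + f φ s)) :
    ∀ (s : ℝ) (φ ψ : K),
      (inner ℝ ((T s φ : K) : H) ((ψ : K) : H) : ℝ)
        = (inner ℝ ((φ : K) : H) ((T s ψ : K) : H) : ℝ) := by
  intro s φ ψ
  calc (inner ℝ ((T s φ : K) : H) ((ψ : K) : H) : ℝ)
      = inner ℝ ((T s φ : K) : H) (((ψ : K) : H) + f ψ s) := by
        rw [inner_add_right, hfmem ψ s _ (T s φ).2, add_zero]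
    _ = inner ℝ (N s ((φ : H) + f φ s)) (((ψ : K) : H) + f ψ s) := by rw [hT]
    _ = inner ℝ ((φ : H) + f φ s) (N s (((ψ : K) : H) + f ψ s)) := hNsym s _ _
    _ = inner ℝ ((φ : H) + f φ s) ((T s ψ : K) : H) := by rw [hT]
    _ = inner ℝ ((φ : K) : H) ((T s ψ : K) : H) := by
        have h : (inner ℝ (f φ s) (((T s ψ : K) : H)) : ℝ) = 0 := by
          rw [real_inner_comm]; exact hfmem φ s _ (T s ψ).2
        rw [inner_add_left, h, add_zero]
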